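/- Let a, x, y be elements of a good group H of exponent 4 such that y⁻¹xy = x⁻¹, the subgroup ⟨x,y⟩ is isomorphic to C₄ ⋊ C₄, and a² ∉ ⟨x,y⟩. Then x centralizes a and y inverts a (y⁻¹ay = a⁻¹). If moreover b ∈ H with a² ≠ b² and b² ∉ ⟨x,y⟩, then a and b commute. -/

import Mathlib

/-- A group is *dihedral* if it is isomorphic to some `DihedralGroup n` with `n ≠ 0`. -/
def IsDihedralGroup (Q : Type*) [Group Q] : Prop :=
  ∃ n : ℕ, n ≠ 0 ∧ Nonempty (Q ≃* DihedralGroup n)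

/-- A 2-group `G` is *good* if for all `g h : G` the subgroup `⟨g²⟩` is normal in `G`
and the quotient `⟨g,h⟩/⟨g²⟩` is abelian or dihedral. -/
def IsGood (G : Type*) [Group G] : Prop :=
  IsPGroup 2 G ∧
  ∀ g h : G, ∃ hn : (Subgroup.zpowers (g ^ 2)).Normal,
    haveI := hn.subgroupOf (Subgroup.closure {g, h})
    (∀ x y : ↥(Subgroup.closure {g, h}) ⧸
        (Subgroup.zpowers (g ^ 2)).subgroupOf (Subgroup.closure {g, h}), x * y = y * x) ∨
    IsDihedralGroup (↥(Subgroup.closure {g, h}) ⧸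
        (Subgroup.zpowers (g ^ 2)).subgroupOf (Subgroup.closure {g, h}))

/-- Relations of `C₄ ⋊ C₄ = ⟨x,y ∣ x⁴ = y⁴ = 1, y⁻¹xy = x⁻¹⟩`. -/
def C4rC4rels : Set (FreeGroup (Fin 2)) :=
  { FreeGroup.of 0 ^ 4, FreeGroup.of 1 ^ 4,
    (FreeGroup.of 1)⁻¹ * FreeGroup.of 0 * FreeGroup.of 1 * FreeGroup.of 0 }


namespace GoodAux

lemma dihedral_fact {n : ℕ} (hn : n ∣ 4) (hn0 : n ≠ 0) (u v : DihedralGroup n)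
    (hu : u * u = 1) :
    u⁻¹ * v⁻¹ * u * v = 1 ∨ u⁻¹ * v⁻¹ * u * v = v * v ∨ v * v = 1 := by
  have h4 : n ≤ 4 := Nat.le_of_dvd (by norm_num) hn
  interval_cases n
  · exact absurd rfl hn0
  · revert hu; revert u v; decide
  · revert hu; revert u v; decide
  · exact absurd hn (by decide)
  · revert hu; revert u v; decide

variable {H : Type*} [Group H]

lemma mem_zpowers_invol {g t : H} (h2 : g * g = 1) (ht : t ∈ Subgroup.zpowers g) :
    t = 1 ∨ t = g := by
  obtain ⟨k, hk⟩ := Subgroup.mem_zpowers_iff.mp ht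
  have hsq : g ^ (2:ℤ) = 1 := by rw [show (2:ℤ) = 1 + 1 by norm_num, zpow_add, zpow_one, h2]
  rcases Int.even_or_odd k with ⟨m, hm⟩ | ⟨m, hm⟩
  · left; rw [← hk, hm, show m + m = 2 * m by ring, zpow_mul, hsq, one_zpow]
  · right; rw [← hk, hm, zpow_add, zpow_mul, hsq, one_zpow, one_mul, zpow_one]

/-- squares are central in a good group of exponent 4 -/
lemma sq_central (hgood : IsGood H) (h4 : ∀ g : H, g ^ 4 = 1) (g h : H) :
    g ^ 2 * h = h * g ^ 2 := by
  obtain ⟨hn, -⟩ := hgood.2 g g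
  have hmem : h * g ^ 2 * h⁻¹ ∈ Subgroup.zpowers (g ^ 2) :=
    hn.conj_mem _ (Subgroup.mem_zpowers _) h
  have h2 : g ^ 2 * g ^ 2 = 1 := by rw [← pow_add]; exact h4 g
  rcases mem_zpowers_invol h2 hmem with h1 | h1
  · have : g ^ 2 = 1 := by
      have := congrArg (fun z => h⁻¹ * z * h) h1
      simpa [mul_assoc] using this
    rw [this, one_mul, mul_one]
  · have := congrArg (fun z => z * h) h1
    simpa [mul_assoc] using this.symm


/-- commutator -/
def cc (u v : H) : H := u⁻¹ * v⁻¹ * u * v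

variable (hZ : ∀ g h : H, g ^ 2 * h = h * g ^ 2) (h4 : ∀ g : H, g ^ 4 = 1)

include h4 in
lemma inv2 (g : H) : g ^ 2 * g ^ 2 = 1 := by rw [← pow_add]; exact h4 g

include h4 in
lemma sq_inv (g : H) : (g ^ 2)⁻¹ = g ^ 2 := by
  rw [inv_eq_iff_mul_eq_one]; exact inv2 h4 g

include hZ in
lemma cc_eq (u v : H) : cc u v = ((v * u)⁻¹) ^ 2 * v ^ 2 * u ^ 2 := by
  calc cc u v = ((v * u)⁻¹) ^ 2 * (v * (u ^ 2 * v)) := by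
        unfold cc; simp only [pow_two]; group
    _ = ((v * u)⁻¹) ^ 2 * (v * (v * u ^ 2)) := by rw [hZ u v]
    _ = ((v * u)⁻¹) ^ 2 * v ^ 2 * u ^ 2 := by simp only [pow_two]; group

include hZ in
lemma cc_central (u v w : H) : cc u v * w = w * cc u v := by
  rw [cc_eq hZ]
  calc ((v * u)⁻¹) ^ 2 * v ^ 2 * u ^ 2 * w
      = ((v * u)⁻¹) ^ 2 * v ^ 2 * (u ^ 2 * w) := by group
    _ = ((v * u)⁻¹) ^ 2 * v ^ 2 * (w * u ^ 2) := by rw [hZ u w]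
    _ = ((v * u)⁻¹) ^ 2 * (v ^ 2 * w) * u ^ 2 := by group
    _ = ((v * u)⁻¹) ^ 2 * (w * v ^ 2) * u ^ 2 := by rw [hZ v w]
    _ = (((v * u)⁻¹) ^ 2 * w) * v ^ 2 * u ^ 2 := by group
    _ = (w * ((v * u)⁻¹) ^ 2) * v ^ 2 * u ^ 2 := by rw [hZ (v*u)⁻¹ w]
    _ = w * (((v * u)⁻¹) ^ 2 * v ^ 2 * u ^ 2) := by group

include hZ in
lemma cc_mul_left (u v w : H) : cc (u * v) w = cc u w * cc v w := by
  calc cc (u * v) w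
      = v⁻¹ * (cc u w * w⁻¹) * v * w := by unfold cc; group
    _ = v⁻¹ * (w⁻¹ * cc u w) * v * w := by rw [cc_central hZ u w w⁻¹]
    _ = v⁻¹ * w⁻¹ * (cc u w * v) * w := by group
    _ = v⁻¹ * w⁻¹ * (v * cc u w) * w := by rw [cc_central hZ u w v]
    _ = (v⁻¹ * w⁻¹ * v * w) * (w⁻¹ * (cc u w * w)) := by group
    _ = (v⁻¹ * w⁻¹ * v * w) * (w⁻¹ * (w * cc u w)) := by rw [cc_central hZ u w w]
    _ = cc v w * cc u w := by unfold cc; group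
    _ = cc u w * cc v w := by rw [cc_central hZ u w (cc v w)]

include hZ in
lemma cc_comm_eq_one {u v : H} (h : u * v = v * u) : cc u v = 1 := by
  have e : cc u v = (v * u)⁻¹ * (u * v) := by unfold cc; group
  rw [e, h]; group

include hZ in
lemma cc_sq (u v : H) : cc u v * cc u v = 1 := by
  have h := cc_mul_left hZ u u v
  rw [← pow_two u] at h
  rw [← h]
  exact cc_comm_eq_one hZ (hZ u v)

include hZ in
lemma cc_symm (u v : H) : cc v u = cc u v := by
  have h1 : cc v u * cc u v = 1 := by unfold cc; group
  have h2 := cc_sq hZ u v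
  calc cc v u = cc v u * (cc u v * cc u v) := by rw [h2, mul_one]
    _ = (cc v u * cc u v) * cc u v := by group
    _ = cc u v := by rw [h1, one_mul]

include hZ in
lemma cc_mul_right (u v w : H) : cc u (v * w) = cc u v * cc u w := by
  calc cc u (v * w) = cc (v * w) u := cc_symm hZ (v * w) u
    _ = cc v u * cc w u := cc_mul_left hZ v w u
    _ = cc u v * cc u w := by rw [cc_symm hZ u v, cc_symm hZ u w]

include hZ in
lemma sq_mul (u v : H) : (u * v) ^ 2 = u ^ 2 * v ^ 2 * cc v u := by
  calc (u * v) ^ 2 = u ^ 2 * (v * cc v u * v) := by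
        unfold cc; simp only [pow_two]; group
    _ = u ^ 2 * ((cc v u * v) * v) := by rw [← cc_central hZ v u v]
    _ = u ^ 2 * (cc v u * v ^ 2) := by simp only [pow_two]; group
    _ = u ^ 2 * (v ^ 2 * cc v u) := by rw [cc_central hZ v u (v ^ 2)]
    _ = u ^ 2 * v ^ 2 * cc v u := by group


/-- **Lemma L** -/
lemma lemmaL (hgood : IsGood H) (h4 : ∀ g : H, g ^ 4 = 1) (u v : H) :
    (cc u v = 1 ∨ cc u v = u ^ 2 ∨
     cc u v = v ^ 2 ∨ cc u v = u ^ 2 * v ^ 2) ∨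
    (v ^ 2 = 1 ∨ v ^ 2 = u ^ 2) := by
  classical
  unfold cc
  obtain ⟨hn, hcase⟩ := hgood.2 u v
  haveI := hn.subgroupOf (Subgroup.closure {u, v})
  set K : Subgroup H := Subgroup.closure {u, v} with hK
  have huK : u ∈ K := Subgroup.subset_closure (Set.mem_insert _ _)
  have hvK : v ∈ K := Subgroup.subset_closure (Set.mem_insert_of_mem _ rfl)
  set N : Subgroup K := (Subgroup.zpowers (u ^ 2)).subgroupOf K with hN
  set uu : K := ⟨u, huK⟩
  set vv : K := ⟨v, hvK⟩
  have hu2inv : u ^ 2 * u ^ 2 = 1 := by rw [← pow_add]; exact h4 u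
  -- translation: images in quotient
  have key : ∀ w : K, ((w : H) ∈ Subgroup.zpowers (u ^ 2)) ↔
      (QuotientGroup.mk' N w = 1) := by
    intro w
    rw [QuotientGroup.mk'_apply, QuotientGroup.eq_one_iff, hN, Subgroup.mem_subgroupOf]
  -- the commutator element of K
  set ccK : K := uu⁻¹ * vv⁻¹ * uu * vv with hccK
  have hccKcoe : (ccK : H) = u⁻¹ * v⁻¹ * u * v := rfl
  have hvv2coe : ((vv * vv : K) : H) = v ^ 2 := by
    rw [pow_two]; rfl
  -- cases
  have main : (QuotientGroup.mk' N ccK = 1) ∨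
      (QuotientGroup.mk' N ccK = QuotientGroup.mk' N (vv * vv)) ∨
      (QuotientGroup.mk' N (vv * vv) = 1) := by
    rcases hcase with hab | ⟨n, hn0, ⟨e⟩⟩
    · left
      have : QuotientGroup.mk' N ccK =
          (QuotientGroup.mk' N uu)⁻¹ * (QuotientGroup.mk' N vv)⁻¹ *
          (QuotientGroup.mk' N uu) * (QuotientGroup.mk' N vv) := by
        rw [hccK]; simp [map_mul]
      rw [this]
      have h := hab (QuotientGroup.mk' N uu) (QuotientGroup.mk' N vv)
      set p := QuotientGroup.mk' N uu
      set q := QuotientGroup.mk' N vv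
      calc p⁻¹ * q⁻¹ * p * q = p⁻¹ * (q⁻¹ * (p * q)) := by group
        _ = p⁻¹ * (q⁻¹ * (q * p)) := by rw [h]
        _ = 1 := by group
    · -- dihedral case
      -- exponent divides 4 in the quotient
      have hq4 : ∀ q : K ⧸ N, q ^ 4 = 1 := by
        intro q
        obtain ⟨z, rfl⟩ := QuotientGroup.mk'_surjective N q
        rw [← map_pow]
        have : (z ^ 4 : K) = 1 := by
          ext
          push_cast
          exact h4 (z : H)
        rw [this, map_one]
      have hdvd : n ∣ 4 := by
        have h1 : (DihedralGroup.r 1 : DihedralGroup n) ^ 4 = 1 := by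
          have := hq4 (e.symm (DihedralGroup.r 1))
          have h2 := congrArg e this
          rwa [map_pow, MulEquiv.apply_symm_apply, map_one] at h2
        rw [DihedralGroup.r_one_pow] at h1
        haveI : NeZero n := ⟨hn0⟩
        have h0 : ((4 : ℕ) : ZMod n) = 0 := by
          have : DihedralGroup.r ((4:ℕ) : ZMod n) = DihedralGroup.r 0 := by
            rw [h1]; rfl
          exact DihedralGroup.r.injEq _ _ ▸ this
        exact (ZMod.natCast_eq_zero_iff 4 n).mp h0
      -- transport pointwise fact
      have fact : ∀ p q : K ⧸ N, p * p = 1 →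
          (p⁻¹ * q⁻¹ * p * q = 1 ∨ p⁻¹ * q⁻¹ * p * q = q * q ∨ q * q = 1) := by
        intro p q hp
        have hp' : e p * e p = 1 := by rw [← map_mul, hp, map_one]
        rcases dihedral_fact hdvd hn0 (e p) (e q) hp' with h | h | h
        · left; apply e.injective; rw [map_one]; simpa [map_mul, map_inv] using h
        · right; left; apply e.injective; simpa [map_mul, map_inv] using h
        · right; right; apply e.injective; rw [map_one]; simpa [map_mul] using h
      have hpp : QuotientGroup.mk' N uu * QuotientGroup.mk' N uu = 1 := by
        rw [← map_mul, ← key]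
        show (u * u : H) ∈ _
        rw [← pow_two]
        exact Subgroup.mem_zpowers _
      rcases fact (QuotientGroup.mk' N uu) (QuotientGroup.mk' N vv) hpp with h | h | h
      · left
        rw [show QuotientGroup.mk' N ccK =
          (QuotientGroup.mk' N uu)⁻¹ * (QuotientGroup.mk' N vv)⁻¹ *
          (QuotientGroup.mk' N uu) * (QuotientGroup.mk' N vv) from by rw [hccK]; simp [map_mul]]
        exact h
      · right; left
        rw [show QuotientGroup.mk' N ccK =
          (QuotientGroup.mk' N uu)⁻¹ * (QuotientGroup.mk' N vv)⁻¹ *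
          (QuotientGroup.mk' N uu) * (QuotientGroup.mk' N vv) from by rw [hccK]; simp [map_mul]]
        rw [map_mul]
        exact h
      · right; right; rw [map_mul]; exact h
  -- now translate back
  rcases main with h | h | h
  · left
    have := (key ccK).mpr h
    rw [hccKcoe] at this
    rcases mem_zpowers_invol hu2inv this with h1 | h1
    · exact Or.inl h1
    · exact Or.inr (Or.inl h1)
  · -- cc = vv*vv mod N
    have h2 : QuotientGroup.mk' N (ccK * (vv * vv)⁻¹) = 1 := by
      rw [map_mul, h, map_inv, mul_inv_cancel]
    have := (key _).mpr h2
    have hcoe : ((ccK * (vv * vv)⁻¹ : K) : H) = (u⁻¹ * v⁻¹ * u * v) * (v ^ 2)⁻¹ := by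
      push_cast [hccKcoe, hvv2coe]
      rfl
    rw [hcoe] at this
    rcases mem_zpowers_invol hu2inv this with h1 | h1
    · left; right; right; left
      rw [← mul_inv_eq_one]; exact h1
    · left; right; right; right
      rw [← h1]; group
  · right
    have := (key _).mpr h
    rw [hvv2coe] at this
    rcases mem_zpowers_invol hu2inv this with h1 | h1
    · exact Or.inl h1
    · exact Or.inr h1


section SqLemma
variable {x y : H} (hZ : ∀ g h : H, g ^ 2 * h = h * g ^ 2) (h4 : ∀ g : H, g ^ 4 = 1)
  (hxy : y⁻¹ * x * y = x⁻¹)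

def sP (x y : H) (s : H) : Prop := s = 1 ∨ s = x ^ 2 ∨ s = y ^ 2 ∨ s = x ^ 2 * y ^ 2
def wP (x y : H) (w : H) : Prop := w = 1 ∨ w = x ∨ w = y ∨ w = x * y

include hZ in
lemma sCentral {s : H} (hs : sP x y s) (h : H) : s * h = h * s := by
  rcases hs with rfl | rfl | rfl | rfl
  · rw [one_mul, mul_one]
  · exact hZ x h
  · exact hZ y h
  · calc x ^ 2 * y ^ 2 * h = x ^ 2 * (y ^ 2 * h) := by group
      _ = x ^ 2 * (h * y ^ 2) := by rw [hZ y h]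
      _ = (x ^ 2 * h) * y ^ 2 := by group
      _ = (h * x ^ 2) * y ^ 2 := by rw [hZ x h]
      _ = h * (x ^ 2 * y ^ 2) := by group

include hZ h4 in
lemma sSq {s : H} (hs : sP x y s) : s * s = 1 := by
  have i2 : ∀ g : H, g ^ 2 * g ^ 2 = 1 := fun g => by rw [← pow_add]; exact h4 g
  rcases hs with rfl | rfl | rfl | rfl
  · rw [one_mul]
  · exact i2 x
  · exact i2 y
  · calc x ^ 2 * y ^ 2 * (x ^ 2 * y ^ 2) = x ^ 2 * (y ^ 2 * x ^ 2) * y ^ 2 := by group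
      _ = x ^ 2 * (x ^ 2 * y ^ 2) * y ^ 2 := by rw [hZ y (x^2)]
      _ = (x ^ 2 * x ^ 2) * (y ^ 2 * y ^ 2) := by group
      _ = 1 := by rw [i2 x, i2 y, one_mul]

include hZ h4 in
lemma sMul {s t : H} (hs : sP x y s) (ht : sP x y t) : sP x y (s * t) := by
  have i2 : ∀ g : H, g ^ 2 * g ^ 2 = 1 := fun g => by rw [← pow_add]; exact h4 g
  have yx : y ^ 2 * x ^ 2 = x ^ 2 * y ^ 2 := hZ y (x ^ 2)
  rcases hs with rfl | rfl | rfl | rfl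
  · rw [one_mul]; exact ht
  · rcases ht with rfl | rfl | rfl | rfl
    · rw [mul_one]; exact Or.inr (Or.inl rfl)
    · exact Or.inl (i2 x)
    · exact Or.inr (Or.inr (Or.inr rfl))
    · right; right; left
      calc x ^ 2 * (x ^ 2 * y ^ 2) = (x ^ 2 * x ^ 2) * y ^ 2 := by group
        _ = y ^ 2 := by rw [i2 x, one_mul]
  · rcases ht with rfl | rfl | rfl | rfl
    · rw [mul_one]; exact Or.inr (Or.inr (Or.inl rfl))
    · exact Or.inr (Or.inr (Or.inr yx))
    · exact Or.inl (i2 y)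
    · right; left
      calc y ^ 2 * (x ^ 2 * y ^ 2) = (y ^ 2 * x ^ 2) * y ^ 2 := by group
        _ = x ^ 2 * (y ^ 2 * y ^ 2) := by rw [yx]; group
        _ = x ^ 2 := by rw [i2 y, mul_one]
  · rcases ht with rfl | rfl | rfl | rfl
    · rw [mul_one]; exact Or.inr (Or.inr (Or.inr rfl))
    · right; right; left
      calc x ^ 2 * y ^ 2 * x ^ 2 = x ^ 2 * (y ^ 2 * x ^ 2) := by group
        _ = (x ^ 2 * x ^ 2) * y ^ 2 := by rw [yx]; group
        _ = y ^ 2 := by rw [i2 x, one_mul]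
    · right; left
      calc x ^ 2 * y ^ 2 * y ^ 2 = x ^ 2 * (y ^ 2 * y ^ 2) := by group
        _ = x ^ 2 := by rw [i2 y, mul_one]
    · left
      calc x ^ 2 * y ^ 2 * (x ^ 2 * y ^ 2) = x ^ 2 * (y ^ 2 * x ^ 2) * y ^ 2 := by group
        _ = (x ^ 2 * x ^ 2) * (y ^ 2 * y ^ 2) := by rw [yx]; group
        _ = 1 := by rw [i2 x, i2 y, one_mul]


include hZ h4 in
lemma sInv {s : H} (hs : sP x y s) : s⁻¹ = s :=
  inv_eq_of_mul_eq_one_left (sSq hZ h4 hs)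

include hZ h4 hxy in
lemma wSq {w : H} (hw : wP x y w) : w * w = 1 ∨ w * w = x ^ 2 ∨ w * w = y ^ 2 := by
  have i2 : ∀ g : H, g ^ 2 * g ^ 2 = 1 := fun g => by rw [← pow_add]; exact h4 g
  have hxy' : x * y = y * x⁻¹ := by rw [← hxy]; group
  have swapyx : y * x = x * y * x ^ 2 := by rw [hxy']; simp only [pow_two]; group
  rcases hw with h | h | h | h
  · subst w; left; rw [one_mul]
  · subst w; right; left; rw [pow_two]
  · subst w; right; right; rw [pow_two]
  · subst w; right; right
    calc (x * y) * (x * y) = x * (y * x) * y := by group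
      _ = x * (x * y * x ^ 2) * y := by rw [swapyx]
      _ = x ^ 2 * y * (x ^ 2 * y) := by simp only [pow_two]; group
      _ = y * x ^ 2 * (y * x ^ 2) := by rw [hZ x y]
      _ = y * (x ^ 2 * y) * x ^ 2 := by group
      _ = y * (y * x ^ 2) * x ^ 2 := by rw [hZ x y]
      _ = y ^ 2 * (x ^ 2 * x ^ 2) := by simp only [pow_two]; group
      _ = y ^ 2 := by rw [i2 x, mul_one]

include hZ h4 hxy in
lemma wMul {w1 w2 : H} (hw1 : wP x y w1) (hw2 : wP x y w2) :
    ∃ w s, wP x y w ∧ sP x y s ∧ w1 * w2 = w * s := by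
  have i2 : ∀ g : H, g ^ 2 * g ^ 2 = 1 := fun g => by rw [← pow_add]; exact h4 g
  have hxy' : x * y = y * x⁻¹ := by rw [← hxy]; group
  have swapyx : y * x = x * y * x ^ 2 := by rw [hxy']; simp only [pow_two]; group
  rcases hw1 with h1 | h1 | h1 | h1 <;> subst w1
  · exact ⟨w2, 1, hw2, Or.inl rfl, by group⟩
  · rcases hw2 with h2 | h2 | h2 | h2 <;> subst w2
    · exact ⟨x, 1, Or.inr (Or.inl rfl), Or.inl rfl, by group⟩
    · exact ⟨1, x ^ 2, Or.inl rfl, Or.inr (Or.inl rfl), by rw [pow_two, one_mul]⟩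
    · exact ⟨x * y, 1, Or.inr (Or.inr (Or.inr rfl)), Or.inl rfl, by group⟩
    · refine ⟨y, x ^ 2, Or.inr (Or.inr (Or.inl rfl)), Or.inr (Or.inl rfl), ?_⟩
      calc x * (x * y) = x ^ 2 * y := by rw [pow_two]; group
        _ = y * x ^ 2 := hZ x y
  · rcases hw2 with h2 | h2 | h2 | h2 <;> subst w2
    · exact ⟨y, 1, Or.inr (Or.inr (Or.inl rfl)), Or.inl rfl, by group⟩
    · exact ⟨x * y, x ^ 2, Or.inr (Or.inr (Or.inr rfl)), Or.inr (Or.inl rfl), swapyx⟩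
    · exact ⟨1, y ^ 2, Or.inl rfl, Or.inr (Or.inr (Or.inl rfl)), by rw [pow_two]; group⟩
    · refine ⟨x, x ^ 2 * y ^ 2, Or.inr (Or.inl rfl),
        Or.inr (Or.inr (Or.inr rfl)), ?_⟩
      calc y * (x * y) = (y * x) * y := by group
        _ = (x * y * x ^ 2) * y := by rw [swapyx]
        _ = x * (y * (x ^ 2 * y)) := by group
        _ = x * (y * (y * x ^ 2)) := by rw [hZ x y]
        _ = x * (y ^ 2 * x ^ 2) := by simp only [pow_two]; group
        _ = x * (x ^ 2 * y ^ 2) := by rw [hZ y (x ^ 2)]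
  · rcases hw2 with h2 | h2 | h2 | h2 <;> subst w2
    · exact ⟨x * y, 1, Or.inr (Or.inr (Or.inr rfl)), Or.inl rfl, by group⟩
    · refine ⟨y, 1, Or.inr (Or.inr (Or.inl rfl)), Or.inl rfl, ?_⟩
      calc (x * y) * x = x * (y * x) := by group
        _ = x * (x * y * x ^ 2) := by rw [swapyx]
        _ = x ^ 2 * y * x ^ 2 := by simp only [pow_two]; group
        _ = y * x ^ 2 * x ^ 2 := by rw [hZ x y]
        _ = y * (x ^ 2 * x ^ 2) := by group
        _ = y * 1 := by rw [i2 x]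
    · exact ⟨x, y ^ 2, Or.inr (Or.inl rfl), Or.inr (Or.inr (Or.inl rfl)),
        by simp only [pow_two]; group⟩
    · refine ⟨1, y ^ 2, Or.inl rfl, Or.inr (Or.inr (Or.inl rfl)), ?_⟩
      rw [one_mul]
      calc (x * y) * (x * y) = x * (y * x) * y := by group
        _ = x * (x * y * x ^ 2) * y := by rw [swapyx]
        _ = x ^ 2 * y * (x ^ 2 * y) := by simp only [pow_two]; group
        _ = y * x ^ 2 * (y * x ^ 2) := by rw [hZ x y]
        _ = y * (x ^ 2 * y) * x ^ 2 := by group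
        _ = y * (y * x ^ 2) * x ^ 2 := by rw [hZ x y]
        _ = y ^ 2 * (x ^ 2 * x ^ 2) := by simp only [pow_two]; group
        _ = y ^ 2 := by rw [i2 x, mul_one]

include hZ h4 hxy in
lemma nf : ∀ k ∈ Subgroup.closure ({x, y} : Set H),
    ∃ w s, wP x y w ∧ sP x y s ∧ k = w * s := by
  intro k hk
  refine Subgroup.closure_induction ?_ ?_ ?_ ?_ hk
  · intro g hg
    rcases hg with h | h
    · subst g
      exact ⟨x, 1, Or.inr (Or.inl rfl), Or.inl rfl, (mul_one x).symm⟩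
    · rw [Set.mem_singleton_iff] at h; subst g
      exact ⟨y, 1, Or.inr (Or.inr (Or.inl rfl)), Or.inl rfl, (mul_one y).symm⟩
  · exact ⟨1, 1, Or.inl rfl, Or.inl rfl, (mul_one 1).symm⟩
  · rintro p q - - ⟨w1, s1, hw1, hs1, rfl⟩ ⟨w2, s2, hw2, hs2, rfl⟩
    obtain ⟨w, s, hw, hs, hws⟩ := wMul hZ h4 hxy hw1 hw2
    refine ⟨w, s * (s1 * s2), hw, sMul hZ h4 hs (sMul hZ h4 hs1 hs2), ?_⟩
    calc (w1 * s1) * (w2 * s2) = w1 * (s1 * w2) * s2 := by group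
      _ = w1 * (w2 * s1) * s2 := by rw [sCentral hZ hs1 w2]
      _ = (w1 * w2) * (s1 * s2) := by group
      _ = (w * s) * (s1 * s2) := by rw [hws]
      _ = w * (s * (s1 * s2)) := by group
  · rintro p - ⟨w, s, hw, hs, rfl⟩
    have hsi : s⁻¹ = s := sInv hZ h4 hs
    have hwsqP : sP x y (w * w) := by
      rcases wSq hZ h4 hxy hw with h | h | h
      · exact Or.inl h
      · exact Or.inr (Or.inl h)
      · exact Or.inr (Or.inr (Or.inl h))
    refine ⟨w, (w * w)⁻¹ * s⁻¹, hw, ?_, ?_⟩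
    · rw [hsi, sInv hZ h4 hwsqP]
      exact sMul hZ h4 hwsqP hs
    · have key : (w * s)⁻¹ = s⁻¹ * (w * (w * w)⁻¹) := by group
      rw [key, hsi, sInv hZ h4 hwsqP]
      rw [sCentral hZ hs (w * (w * w))]
      group

include hZ h4 hxy in
lemma sq_of_mem {k : H} (hk : k ∈ Subgroup.closure ({x, y} : Set H)) :
    sP x y (k ^ 2) := by
  obtain ⟨w, s, hw, hs, rfl⟩ := nf hZ h4 hxy k hk
  have hh : (w * s) ^ 2 = w * w := by
    calc (w * s) ^ 2 = w * (s * w) * s := by simp only [pow_two]; group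
      _ = w * (w * s) * s := by rw [sCentral hZ hs w]
      _ = (w * w) * (s * s) := by group
      _ = w * w := by rw [sSq hZ h4 hs, mul_one]
  rw [hh]
  rcases wSq hZ h4 hxy hw with h | h | h
  · exact Or.inl h
  · exact Or.inr (Or.inl h)
  · exact Or.inr (Or.inr (Or.inl h))

end SqLemma

open DihedralGroup

abbrev M : Type := DihedralGroup 4 × DihedralGroup 4

def fgen : Fin 2 → M := ![(r 1, 1), (sr 0, r 1)]

lemma fgen_rels : ∀ rel ∈ C4rC4rels, (FreeGroup.lift fgen) rel = 1 := by
  intro rel hrel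
  rcases hrel with h | h | h
  · subst h; simp only [map_pow, FreeGroup.lift_apply_of]; decide
  · subst h; simp only [map_pow, FreeGroup.lift_apply_of]; decide
  · rw [h]; simp only [map_mul, map_inv, FreeGroup.lift_apply_of]; decide

def phi : PresentedGroup C4rC4rels →* M := PresentedGroup.toGroup fgen_rels

lemma phi_of (i : Fin 2) : phi (PresentedGroup.of i) = fgen i := PresentedGroup.toGroup.of fgen_rels

lemma p0sq : phi ((PresentedGroup.of 0) ^ 2) = (r 2, 1) := by
  rw [map_pow, phi_of]; decide

lemma p1sq : phi ((PresentedGroup.of 1) ^ 2) = (1, r 2) := by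
  rw [map_pow, phi_of]; decide

lemma of0_sq_ne_one : (PresentedGroup.of (rels := C4rC4rels) 0) ^ 2 ≠ 1 := by
  intro h
  have := congrArg phi h
  rw [p0sq, map_one] at this
  exact absurd this (by decide)

lemma of1_sq_ne_one : (PresentedGroup.of (rels := C4rC4rels) 1) ^ 2 ≠ 1 := by
  intro h
  have := congrArg phi h
  rw [p1sq, map_one] at this
  exact absurd this (by decide)

lemma of_sq_ne : (PresentedGroup.of (rels := C4rC4rels) 0) ^ 2 ≠ (PresentedGroup.of 1) ^ 2 := by
  intro h
  have := congrArg phi h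
  rw [p0sq, p1sq] at this
  exact absurd this (by decide)


end GoodAux

/-- **Lemma 4.9**: in a good group of exponent 4, if `xʸ = x⁻¹`,
`⟨x,y⟩ ≅ C₄ ⋊ C₄` and `a² ∉ ⟨x,y⟩`, then `x` centralizes and `y` inverts `a`;
and if moreover `a² ≠ b² ∉ ⟨x,y⟩` then `a` and `b` commute. -/
theorem good_exponent_four_C4C4 (H : Type*) [Group H] (hgood : IsGood H)
    (hexp : Monoid.exponent H = 4) (a x y : H) (hxy : y⁻¹ * x * y = x⁻¹)
    (hiso : Nonempty (↥(Subgroup.closure {x, y}) ≃* PresentedGroup C4rC4rels))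
    (ha : a ^ 2 ∉ Subgroup.closure {x, y}) :
    (x * a = a * x ∧ y⁻¹ * a * y = a⁻¹) ∧
    (∀ b : H, a ^ 2 ≠ b ^ 2 → b ^ 2 ∉ Subgroup.closure {x, y} → a * b = b * a) := by
  classical
  obtain ⟨e⟩ := hiso
  have h4 : ∀ g : H, g ^ 4 = 1 := fun g => by
    have hh := Monoid.pow_exponent_eq_one g
    rwa [hexp] at hh
  have hZ : ∀ g h : H, g ^ 2 * h = h * g ^ 2 := fun g h => GoodAux.sq_central hgood h4 g h
  have i2 : ∀ g : H, g ^ 2 * g ^ 2 = 1 := GoodAux.inv2 h4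
  have com : ∀ g h : H, g ^ 2 * h ^ 2 = h ^ 2 * g ^ 2 := fun g h => hZ g (h ^ 2)
  have hxK : x ∈ Subgroup.closure ({x, y} : Set H) :=
    Subgroup.subset_closure (Set.mem_insert _ _)
  have hyK : y ∈ Subgroup.closure ({x, y} : Set H) :=
    Subgroup.subset_closure (Set.mem_insert_of_mem _ rfl)
  have hx2K : x ^ 2 ∈ Subgroup.closure ({x, y} : Set H) := pow_mem hxK 2
  have hy2K : y ^ 2 ∈ Subgroup.closure ({x, y} : Set H) := pow_mem hyK 2
  have sPK : ∀ {t : H}, GoodAux.sP x y t → t ∈ Subgroup.closure ({x, y} : Set H) := by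
    rintro t (rfl | rfl | rfl | rfl)
    · exact one_mem _
    · exact hx2K
    · exact hy2K
    · exact mul_mem hx2K hy2K
  -- facts from the presentation
  have hu2 : ((e.symm (PresentedGroup.of 0) : ↥(Subgroup.closure ({x, y} : Set H))) : H) ^ 2 ≠ 1 := by
    intro hcon
    apply GoodAux.of0_sq_ne_one
    have h1 : ((e.symm (PresentedGroup.of 0)) ^ 2 :
        ↥(Subgroup.closure ({x, y} : Set H))) = 1 := by
      apply Subtype.ext; push_cast; exact hcon
    have h2 := congrArg e h1
    rwa [map_pow, MulEquiv.apply_symm_apply, map_one] at h2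
  have hv2 : ((e.symm (PresentedGroup.of 1) : ↥(Subgroup.closure ({x, y} : Set H))) : H) ^ 2 ≠ 1 := by
    intro hcon
    apply GoodAux.of1_sq_ne_one
    have h1 : ((e.symm (PresentedGroup.of 1)) ^ 2 :
        ↥(Subgroup.closure ({x, y} : Set H))) = 1 := by
      apply Subtype.ext; push_cast; exact hcon
    have h2 := congrArg e h1
    rwa [map_pow, MulEquiv.apply_symm_apply, map_one] at h2
  have huv : ((e.symm (PresentedGroup.of 0) : ↥(Subgroup.closure ({x, y} : Set H))) : H) ^ 2 ≠
      ((e.symm (PresentedGroup.of 1) : ↥(Subgroup.closure ({x, y} : Set H))) : H) ^ 2 := by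
    intro hcon
    apply GoodAux.of_sq_ne
    have h1 : ((e.symm (PresentedGroup.of 0)) ^ 2 : ↥(Subgroup.closure ({x, y} : Set H))) =
        (e.symm (PresentedGroup.of 1)) ^ 2 := by
      apply Subtype.ext; push_cast; exact hcon
    have h2 := congrArg e h1
    rwa [map_pow, map_pow, MulEquiv.apply_symm_apply, MulEquiv.apply_symm_apply] at h2
  have hsu : GoodAux.sP x y (((e.symm (PresentedGroup.of 0) :
      ↥(Subgroup.closure ({x, y} : Set H))) : H) ^ 2) :=
    GoodAux.sq_of_mem hZ h4 hxy (e.symm (PresentedGroup.of 0)).2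
  have hsv : GoodAux.sP x y (((e.symm (PresentedGroup.of 1) :
      ↥(Subgroup.closure ({x, y} : Set H))) : H) ^ 2) :=
    GoodAux.sq_of_mem hZ h4 hxy (e.symm (PresentedGroup.of 1)).2
  have hX1 : x ^ 2 ≠ 1 := by
    intro hx
    have c : ∀ t : H, GoodAux.sP x y t → t = 1 ∨ t = y ^ 2 := by
      rintro t (rfl | rfl | rfl | rfl)
      · exact Or.inl rfl
      · exact Or.inl hx
      · exact Or.inr rfl
      · right; rw [hx, one_mul]
    rcases c _ hsu with h | h
    · exact hu2 h
    · rcases c _ hsv with h' | h'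
      · exact hv2 h'
      · exact huv (h.trans h'.symm)
  have hY1 : y ^ 2 ≠ 1 := by
    intro hy
    have c : ∀ t : H, GoodAux.sP x y t → t = 1 ∨ t = x ^ 2 := by
      rintro t (rfl | rfl | rfl | rfl)
      · exact Or.inl rfl
      · exact Or.inr rfl
      · exact Or.inl hy
      · right; rw [hy, mul_one]
    rcases c _ hsu with h | h
    · exact hu2 h
    · rcases c _ hsv with h' | h'
      · exact hv2 h'
      · exact huv (h.trans h'.symm)
  have hXY : x ^ 2 ≠ y ^ 2 := by
    intro hx
    have c : ∀ t : H, GoodAux.sP x y t → t = 1 ∨ t = x ^ 2 := by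
      rintro t (rfl | rfl | rfl | rfl)
      · exact Or.inl rfl
      · exact Or.inr rfl
      · exact Or.inr hx.symm
      · left; rw [← hx, i2 x]
    rcases c _ hsu with h | h
    · exact hu2 h
    · rcases c _ hsv with h' | h'
      · exact hv2 h'
      · exact huv (h.trans h'.symm)
  have hcxy : GoodAux.cc x y = x ^ 2 := by
    calc GoodAux.cc x y = x⁻¹ * (y⁻¹ * x * y) := by unfold GoodAux.cc; group
      _ = x⁻¹ * x⁻¹ := by rw [hxy]
      _ = (x ^ 2)⁻¹ := by group
      _ = x ^ 2 := GoodAux.sq_inv h4 x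
  have hcyx : GoodAux.cc y x = x ^ 2 := (GoodAux.cc_symm hZ x y).trans hcxy
  have hxysq : (x * y) ^ 2 = y ^ 2 := by
    rw [GoodAux.sq_mul hZ x y, hcyx]
    calc x ^ 2 * y ^ 2 * x ^ 2 = x ^ 2 * (y ^ 2 * x ^ 2) := by group
      _ = x ^ 2 * (x ^ 2 * y ^ 2) := by rw [com y x]
      _ = (x ^ 2 * x ^ 2) * y ^ 2 := by group
      _ = y ^ 2 := by rw [i2 x, one_mul]
  -- the core claim, applied to both a and b
  have key1 : ∀ c : H, c ^ 2 ∉ Subgroup.closure ({x, y} : Set H) →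
      GoodAux.cc c x = 1 ∧ GoodAux.cc c y = c ^ 2 := by
    intro c hc
    have hCK : ∀ k ∈ Subgroup.closure ({x, y} : Set H), c ^ 2 ≠ k := fun k hk h => hc (h ▸ hk)
    have hC1 : c ^ 2 ≠ 1 := hCK 1 (one_mem _)
    have hCX : c ^ 2 ≠ x ^ 2 := hCK _ hx2K
    have hCY : c ^ 2 ≠ y ^ 2 := hCK _ hy2K
    have hs : GoodAux.sP c y (GoodAux.cc c y) := by
      rcases GoodAux.lemmaL hgood h4 c y with (h1 | h1 | h1 | h1) | (h1 | h1)
      · exact Or.inl h1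
      · exact Or.inr (Or.inl h1)
      · exact Or.inr (Or.inr (Or.inl h1))
      · exact Or.inr (Or.inr (Or.inr h1))
      · exact absurd h1 hY1
      · exact absurd h1.symm hCY
    have hax : GoodAux.cc c x = 1 := by
      rcases GoodAux.lemmaL hgood h4 c x with (h | h | h | h) | (h | h)
      · exact h
      · -- cc c x = c^2
        exfalso
        have hccx : GoodAux.cc x c = c ^ 2 := (GoodAux.cc_symm hZ c x).trans h
        have hw2 : (c * x) ^ 2 = x ^ 2 := by
          rw [GoodAux.sq_mul hZ c x, hccx]
          calc c ^ 2 * x ^ 2 * c ^ 2 = c ^ 2 * (x ^ 2 * c ^ 2) := by group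
            _ = c ^ 2 * (c ^ 2 * x ^ 2) := by rw [com x c]
            _ = (c ^ 2 * c ^ 2) * x ^ 2 := by group
            _ = x ^ 2 := by rw [i2 c, one_mul]
        have hcwy : GoodAux.cc (c * x) y = GoodAux.cc c y * x ^ 2 := by
          rw [GoodAux.cc_mul_left hZ, hcxy]
        rcases hs with hs1 | hs1 | hs1 | hs1
        · -- cc c y = 1 : use pair (c*x, x*y)
          have hcw_xy : GoodAux.cc (c * x) (x * y) =
              (GoodAux.cc c x * GoodAux.cc c y) * (GoodAux.cc x x * GoodAux.cc x y) := by
            rw [GoodAux.cc_mul_left hZ, GoodAux.cc_mul_right hZ, GoodAux.cc_mul_right hZ]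
          rw [h, hs1, hcxy, GoodAux.cc_comm_eq_one hZ (rfl : x * x = x * x)] at hcw_xy
          have ht2 : GoodAux.sP x y (GoodAux.cc (c * x) (x * y)) := by
            rcases GoodAux.lemmaL hgood h4 (c * x) (x * y) with (h1 | h1 | h1 | h1) | (h1 | h1)
            · exact Or.inl h1
            · rw [hw2] at h1; exact Or.inr (Or.inl h1)
            · rw [hxysq] at h1; exact Or.inr (Or.inr (Or.inl h1))
            · rw [hw2, hxysq] at h1; exact Or.inr (Or.inr (Or.inr h1))
            · rw [hxysq] at h1; exact absurd h1 hY1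
            · rw [hxysq, hw2] at h1; exact absurd h1 hXY.symm
          rw [hcw_xy] at ht2
          have hceq : c ^ 2 = ((c ^ 2 * 1) * (1 * x ^ 2)) * x ^ 2 := by
            rw [mul_one, one_mul, mul_assoc, i2 x, mul_one]
          exact hCK _ (mul_mem (sPK ht2) hx2K) hceq
        · -- cc c y = c^2 : use combination with L(c*x, y)
          have ht : GoodAux.sP x y (GoodAux.cc (c * x) y) := by
            rcases GoodAux.lemmaL hgood h4 (c * x) y with (h1 | h1 | h1 | h1) | (h1 | h1)
            · exact Or.inl h1
            · rw [hw2] at h1; exact Or.inr (Or.inl h1)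
            · exact Or.inr (Or.inr (Or.inl h1))
            · rw [hw2] at h1; exact Or.inr (Or.inr (Or.inr h1))
            · exact absurd h1 hY1
            · rw [hw2] at h1; exact absurd h1 hXY.symm
          rw [hcwy, hs1] at ht
          have hceq : c ^ 2 = (c ^ 2 * x ^ 2) * x ^ 2 := by
            rw [mul_assoc, i2 x, mul_one]
          exact hCK _ (mul_mem (sPK ht) hx2K) hceq
        · -- cc c y = y^2 : use pair (c*x, x*y)
          have hcw_xy : GoodAux.cc (c * x) (x * y) =
              (GoodAux.cc c x * GoodAux.cc c y) * (GoodAux.cc x x * GoodAux.cc x y) := by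
            rw [GoodAux.cc_mul_left hZ, GoodAux.cc_mul_right hZ, GoodAux.cc_mul_right hZ]
          rw [h, hs1, hcxy, GoodAux.cc_comm_eq_one hZ (rfl : x * x = x * x)] at hcw_xy
          have ht2 : GoodAux.sP x y (GoodAux.cc (c * x) (x * y)) := by
            rcases GoodAux.lemmaL hgood h4 (c * x) (x * y) with (h1 | h1 | h1 | h1) | (h1 | h1)
            · exact Or.inl h1
            · rw [hw2] at h1; exact Or.inr (Or.inl h1)
            · rw [hxysq] at h1; exact Or.inr (Or.inr (Or.inl h1))
            · rw [hw2, hxysq] at h1; exact Or.inr (Or.inr (Or.inr h1))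
            · rw [hxysq] at h1; exact absurd h1 hY1
            · rw [hxysq, hw2] at h1; exact absurd h1 hXY.symm
          rw [hcw_xy] at ht2
          have hceq : c ^ 2 = ((c ^ 2 * y ^ 2) * (1 * x ^ 2)) * (x ^ 2 * y ^ 2) := by
            rw [one_mul,
              show ((c ^ 2 * y ^ 2) * x ^ 2) * (x ^ 2 * y ^ 2) =
                c ^ 2 * (y ^ 2 * ((x ^ 2 * x ^ 2) * y ^ 2)) from by group,
              i2 x, one_mul, i2 y, mul_one]
          exact hCK _ (mul_mem (sPK ht2) (mul_mem hx2K hy2K)) hceq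
        · -- cc c y = c^2*y^2
          have ht : GoodAux.sP x y (GoodAux.cc (c * x) y) := by
            rcases GoodAux.lemmaL hgood h4 (c * x) y with (h1 | h1 | h1 | h1) | (h1 | h1)
            · exact Or.inl h1
            · rw [hw2] at h1; exact Or.inr (Or.inl h1)
            · exact Or.inr (Or.inr (Or.inl h1))
            · rw [hw2] at h1; exact Or.inr (Or.inr (Or.inr h1))
            · exact absurd h1 hY1
            · rw [hw2] at h1; exact absurd h1 hXY.symm
          rw [hcwy, hs1] at ht
          have hceq : c ^ 2 = ((c ^ 2 * y ^ 2) * x ^ 2) * (x ^ 2 * y ^ 2) := by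
            rw [show ((c ^ 2 * y ^ 2) * x ^ 2) * (x ^ 2 * y ^ 2) =
                c ^ 2 * (y ^ 2 * ((x ^ 2 * x ^ 2) * y ^ 2)) from by group,
              i2 x, one_mul, i2 y, mul_one]
          exact hCK _ (mul_mem (sPK ht) (mul_mem hx2K hy2K)) hceq
      · -- cc c x = x^2
        exfalso
        have hccx : GoodAux.cc x c = x ^ 2 := (GoodAux.cc_symm hZ c x).trans h
        have hw2 : (c * x) ^ 2 = c ^ 2 := by
          rw [GoodAux.sq_mul hZ c x, hccx]
          calc c ^ 2 * x ^ 2 * x ^ 2 = c ^ 2 * (x ^ 2 * x ^ 2) := by group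
            _ = c ^ 2 := by rw [i2 x, mul_one]
        have hcwy : GoodAux.cc (c * x) y = GoodAux.cc c y * x ^ 2 := by
          rw [GoodAux.cc_mul_left hZ, hcxy]
        have ht : GoodAux.sP c y (GoodAux.cc (c * x) y) := by
          rcases GoodAux.lemmaL hgood h4 (c * x) y with (h1 | h1 | h1 | h1) | (h1 | h1)
          · exact Or.inl h1
          · rw [hw2] at h1; exact Or.inr (Or.inl h1)
          · exact Or.inr (Or.inr (Or.inl h1))
          · rw [hw2] at h1; exact Or.inr (Or.inr (Or.inr h1))
          · exact absurd h1 hY1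
          · rw [hw2] at h1; exact absurd h1.symm hCY
        have hx2eq : x ^ 2 = GoodAux.cc c y * GoodAux.cc (c * x) y := by
          rw [hcwy, show GoodAux.cc c y * (GoodAux.cc c y * x ^ 2) =
              (GoodAux.cc c y * GoodAux.cc c y) * x ^ 2 from by group,
            GoodAux.cc_sq hZ c y, one_mul]
        have hsxx : GoodAux.sP c y (x ^ 2) := by
          rw [hx2eq]; exact GoodAux.sMul hZ h4 hs ht
        rcases hsxx with h1 | h1 | h1 | h1
        · exact hX1 h1
        · exact hCX h1.symm
        · exact hXY h1
        · have : c ^ 2 = x ^ 2 * y ^ 2 := by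
            rw [h1, mul_assoc, i2 y, mul_one]
          exact hCK _ (mul_mem hx2K hy2K) this
      · -- cc c x = c^2 * x^2
        exfalso
        have hccx : GoodAux.cc x c = c ^ 2 * x ^ 2 := (GoodAux.cc_symm hZ c x).trans h
        have hw2 : (c * x) ^ 2 = 1 := by
          rw [GoodAux.sq_mul hZ c x, hccx]
          calc c ^ 2 * x ^ 2 * (c ^ 2 * x ^ 2) = c ^ 2 * (x ^ 2 * c ^ 2) * x ^ 2 := by group
            _ = c ^ 2 * (c ^ 2 * x ^ 2) * x ^ 2 := by rw [com x c]
            _ = (c ^ 2 * c ^ 2) * (x ^ 2 * x ^ 2) := by group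
            _ = 1 := by rw [i2 c, i2 x, one_mul]
        have hcwx : GoodAux.cc (c * x) x = c ^ 2 * x ^ 2 := by
          rw [GoodAux.cc_mul_left hZ, h, GoodAux.cc_comm_eq_one hZ (rfl : x * x = x * x), mul_one]
        have hcx2 : c ^ 2 * x ^ 2 = 1 → False := by
          intro h1
          apply hCX
          calc c ^ 2 = (c ^ 2 * x ^ 2) * x ^ 2 := by rw [mul_assoc, i2 x, mul_one]
            _ = 1 * x ^ 2 := by rw [h1]
            _ = x ^ 2 := one_mul _
        have hcx3 : c ^ 2 * x ^ 2 = x ^ 2 → False := by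
          intro h1
          apply hC1
          calc c ^ 2 = (c ^ 2 * x ^ 2) * x ^ 2 := by rw [mul_assoc, i2 x, mul_one]
            _ = x ^ 2 * x ^ 2 := by rw [h1]
            _ = 1 := i2 x
        rcases GoodAux.lemmaL hgood h4 (c * x) x with (h1 | h1 | h1 | h1) | (h1 | h1)
        · rw [hcwx] at h1; exact hcx2 h1
        · rw [hcwx, hw2] at h1; exact hcx2 h1
        · rw [hcwx] at h1; exact hcx3 h1
        · rw [hcwx, hw2, one_mul] at h1; exact hcx3 h1
        · exact hX1 h1
        · rw [hw2] at h1; exact hX1 h1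
      · exact absurd h hX1
      · exact absurd h.symm hCX
    have hay : GoodAux.cc c y = c ^ 2 := by
      have hcwY : GoodAux.cc (x * c) y = x ^ 2 * GoodAux.cc c y := by
        rw [GoodAux.cc_mul_left hZ, hcxy]
      have hw2 : (x * c) ^ 2 = x ^ 2 * c ^ 2 := by
        rw [GoodAux.sq_mul hZ x c, hax, mul_one]
      rcases hs with hs1 | hs1 | hs1 | hs1
      · -- cc c y = 1 : contradiction via (x*c, y)
        exfalso
        rw [hs1, mul_one] at hcwY
        rcases GoodAux.lemmaL hgood h4 (x * c) y with (h1 | h1 | h1 | h1) | (h1 | h1)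
        · rw [hcwY] at h1; exact hX1 h1
        · rw [hcwY, hw2] at h1
          have h2 : (1 : H) = c ^ 2 :=
            mul_left_cancel (show x ^ 2 * 1 = x ^ 2 * c ^ 2 from by rw [mul_one]; exact h1)
          exact hC1 h2.symm
        · rw [hcwY] at h1; exact hXY h1
        · rw [hcwY, hw2] at h1
          have h2 : (1 : H) = c ^ 2 * y ^ 2 :=
            mul_left_cancel (show x ^ 2 * 1 = x ^ 2 * (c ^ 2 * y ^ 2) from by
              rw [mul_one, ← mul_assoc]; exact h1)
          have h3 : c ^ 2 = y ^ 2 := by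
            calc c ^ 2 = c ^ 2 * 1 := (mul_one _).symm
              _ = c ^ 2 * (c ^ 2 * y ^ 2) := by rw [← h2]
              _ = (c ^ 2 * c ^ 2) * y ^ 2 := by group
              _ = y ^ 2 := by rw [i2 c, one_mul]
          exact hCY h3
        · exact hY1 h1
        · rw [hw2] at h1
          have h3 : c ^ 2 = x ^ 2 * y ^ 2 := by
            calc c ^ 2 = x ^ 2 * (x ^ 2 * c ^ 2) := by rw [← mul_assoc, i2 x, one_mul]
              _ = x ^ 2 * y ^ 2 := by rw [← h1]
          exact hCK _ (mul_mem hx2K hy2K) h3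
      · exact hs1
      · -- cc c y = y^2 : contradiction via (x*c, y)
        exfalso
        rw [hs1] at hcwY
        rcases GoodAux.lemmaL hgood h4 (x * c) y with (h1 | h1 | h1 | h1) | (h1 | h1)
        · rw [hcwY] at h1
          apply hXY
          calc x ^ 2 = (x ^ 2 * y ^ 2) * y ^ 2 := by rw [mul_assoc, i2 y, mul_one]
            _ = 1 * y ^ 2 := by rw [h1]
            _ = y ^ 2 := one_mul _
        · rw [hcwY, hw2] at h1
          exact hCY (mul_left_cancel h1).symm
        · rw [hcwY] at h1
          apply hX1
          calc x ^ 2 = (x ^ 2 * y ^ 2) * y ^ 2 := by rw [mul_assoc, i2 y, mul_one]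
            _ = y ^ 2 * y ^ 2 := by rw [h1]
            _ = 1 := i2 y
        · rw [hcwY, hw2] at h1
          have h2 : y ^ 2 = c ^ 2 * y ^ 2 :=
            mul_left_cancel (show x ^ 2 * y ^ 2 = x ^ 2 * (c ^ 2 * y ^ 2) from by
              rw [← mul_assoc]; exact h1)
          apply hC1
          calc c ^ 2 = (c ^ 2 * y ^ 2) * y ^ 2 := by rw [mul_assoc, i2 y, mul_one]
            _ = y ^ 2 * y ^ 2 := by rw [← h2]
            _ = 1 := i2 y
        · exact hY1 h1
        · rw [hw2] at h1
          have h3 : c ^ 2 = x ^ 2 * y ^ 2 := by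
            calc c ^ 2 = x ^ 2 * (x ^ 2 * c ^ 2) := by rw [← mul_assoc, i2 x, one_mul]
              _ = x ^ 2 * y ^ 2 := by rw [← h1]
          exact hCK _ (mul_mem hx2K hy2K) h3
      · -- cc c y = c^2 * y^2 : contradiction via (y*c, x*y)
        exfalso
        have hccy : GoodAux.cc y c = c ^ 2 * y ^ 2 := (GoodAux.cc_symm hZ c y).trans hs1
        have hw2' : (y * c) ^ 2 = 1 := by
          rw [GoodAux.sq_mul hZ y c, hs1]
          calc y ^ 2 * c ^ 2 * (c ^ 2 * y ^ 2) = y ^ 2 * ((c ^ 2 * c ^ 2) * y ^ 2) := by group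
            _ = y ^ 2 * (1 * y ^ 2) := by rw [i2 c]
            _ = y ^ 2 * y ^ 2 := by rw [one_mul]
            _ = 1 := i2 y
        have hcw : GoodAux.cc (y * c) (x * y) =
            (GoodAux.cc y x * GoodAux.cc y y) * (GoodAux.cc c x * GoodAux.cc c y) := by
          rw [GoodAux.cc_mul_left hZ, GoodAux.cc_mul_right hZ, GoodAux.cc_mul_right hZ]
        rw [hcyx, GoodAux.cc_comm_eq_one hZ (rfl : y * y = y * y), mul_one, hax, one_mul,
          hs1] at hcw
        have solveA : x ^ 2 * (c ^ 2 * y ^ 2) = 1 → False := by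
          intro h1
          have h3 : c ^ 2 = x ^ 2 * y ^ 2 := by
            calc c ^ 2 = x ^ 2 * (x ^ 2 * (c ^ 2 * y ^ 2)) * y ^ 2 := by
                  rw [show x ^ 2 * (x ^ 2 * (c ^ 2 * y ^ 2)) * y ^ 2 =
                      (x ^ 2 * x ^ 2) * (c ^ 2 * (y ^ 2 * y ^ 2)) from by group,
                    i2 x, i2 y, one_mul, mul_one]
              _ = x ^ 2 * 1 * y ^ 2 := by rw [h1]
              _ = x ^ 2 * y ^ 2 := by rw [mul_one]
          exact hCK _ (mul_mem hx2K hy2K) h3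
        have solveB : x ^ 2 * (c ^ 2 * y ^ 2) = y ^ 2 → False := by
          intro h1
          have h3 : c ^ 2 = x ^ 2 := by
            calc c ^ 2 = x ^ 2 * (x ^ 2 * (c ^ 2 * y ^ 2)) * y ^ 2 := by
                  rw [show x ^ 2 * (x ^ 2 * (c ^ 2 * y ^ 2)) * y ^ 2 =
                      (x ^ 2 * x ^ 2) * (c ^ 2 * (y ^ 2 * y ^ 2)) from by group,
                    i2 x, i2 y, one_mul, mul_one]
              _ = x ^ 2 * y ^ 2 * y ^ 2 := by rw [h1]
              _ = x ^ 2 * (y ^ 2 * y ^ 2) := by group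
              _ = x ^ 2 := by rw [i2 y, mul_one]
          exact hCX h3
        rcases GoodAux.lemmaL hgood h4 (y * c) (x * y) with (h1 | h1 | h1 | h1) | (h1 | h1)
        · rw [hcw] at h1; exact solveA h1
        · rw [hcw, hw2'] at h1; exact solveA h1
        · rw [hcw, hxysq] at h1; exact solveB h1
        · rw [hcw, hw2', hxysq, one_mul] at h1; exact solveB h1
        · rw [hxysq] at h1; exact hY1 h1
        · rw [hxysq, hw2'] at h1; exact hY1 h1
    exact ⟨hax, hay⟩
  obtain ⟨hax, hay⟩ := key1 a ha
  have haK : ∀ k ∈ Subgroup.closure ({x, y} : Set H), a ^ 2 ≠ k := fun k hk h => ha (h ▸ hk)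
  have hA1 : a ^ 2 ≠ 1 := haK 1 (one_mem _)
  have hAX : a ^ 2 ≠ x ^ 2 := haK _ hx2K
  have hAY : a ^ 2 ≠ y ^ 2 := haK _ hy2K
  refine ⟨⟨?_, ?_⟩, ?_⟩
  · -- x * a = a * x
    have h' : a⁻¹ * x⁻¹ * a * x = 1 := hax
    calc x * a = x * a * (a⁻¹ * x⁻¹ * a * x) := by rw [h', mul_one]
      _ = a * x := by group
  · -- y⁻¹ * a * y = a⁻¹
    have h' : a⁻¹ * y⁻¹ * a * y = a ^ 2 := hay
    have step : a * a ^ 2 = a⁻¹ := by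
      apply eq_inv_of_mul_eq_one_left
      rw [show a * a ^ 2 * a = a ^ 4 from by group]
      exact h4 a
    calc y⁻¹ * a * y = a * (a⁻¹ * y⁻¹ * a * y) := by group
      _ = a * a ^ 2 := by rw [h']
      _ = a⁻¹ := step
  · -- part 2
    intro b hab hb
    obtain ⟨hbx, hby⟩ := key1 b hb
    have hBK : ∀ k ∈ Subgroup.closure ({x, y} : Set H), b ^ 2 ≠ k := fun k hk h => hb (h ▸ hk)
    have hB1 : b ^ 2 ≠ 1 := hBK 1 (one_mem _)
    have hBX : b ^ 2 ≠ x ^ 2 := hBK _ hx2K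
    have hBY : b ^ 2 ≠ y ^ 2 := hBK _ hy2K
    have hvax : (a * x) ^ 2 = a ^ 2 * x ^ 2 := by
      rw [GoodAux.sq_mul hZ a x, GoodAux.cc_symm hZ a x, hax, mul_one]
    have hvax1 : a ^ 2 * x ^ 2 = 1 → False := by
      intro h1
      apply hAX
      calc a ^ 2 = (a ^ 2 * x ^ 2) * x ^ 2 := by rw [mul_assoc, i2 x, mul_one]
        _ = 1 * x ^ 2 := by rw [h1]
        _ = x ^ 2 := one_mul _
    rcases GoodAux.lemmaL hgood h4 a b with (h | h | h | h) | (h | h)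
    · -- commute!
      have h' : a⁻¹ * b⁻¹ * a * b = 1 := h
      calc a * b = b * a * (a⁻¹ * b⁻¹ * a * b) := by group
        _ = b * a * 1 := by rw [h']
        _ = b * a := mul_one _
    · -- cc a b = a^2
      exfalso
      have hcba : GoodAux.cc b a = a ^ 2 := (GoodAux.cc_symm hZ a b).trans h
      have hw2 : (a * b) ^ 2 = b ^ 2 := by
        rw [GoodAux.sq_mul hZ a b, hcba]
        calc a ^ 2 * b ^ 2 * a ^ 2 = a ^ 2 * (b ^ 2 * a ^ 2) := by group
          _ = a ^ 2 * (a ^ 2 * b ^ 2) := by rw [com b a]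
          _ = (a ^ 2 * a ^ 2) * b ^ 2 := by group
          _ = b ^ 2 := by rw [i2 a, one_mul]
      have hcwy : GoodAux.cc (a * b) y = a ^ 2 * b ^ 2 := by
        rw [GoodAux.cc_mul_left hZ, hay, hby]
      have hABy : a ^ 2 * b ^ 2 = y ^ 2 := by
        rcases GoodAux.lemmaL hgood h4 (a * b) y with (h1 | h1 | h1 | h1) | (h1 | h1)
        · rw [hcwy] at h1
          exfalso; apply hab
          calc a ^ 2 = (a ^ 2 * b ^ 2) * b ^ 2 := by rw [mul_assoc, i2 b, mul_one]
            _ = 1 * b ^ 2 := by rw [h1]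
            _ = b ^ 2 := one_mul _
        · rw [hcwy, hw2] at h1
          exfalso
          exact hA1 (mul_right_cancel (show a ^ 2 * b ^ 2 = 1 * b ^ 2 from by
            rw [one_mul]; exact h1))
        · rw [hcwy] at h1; exact h1
        · rw [hcwy, hw2] at h1
          exfalso
          apply hAY
          have h2 : a ^ 2 * b ^ 2 = y ^ 2 * b ^ 2 := by rw [h1, com b y]
          exact mul_right_cancel h2
        · exact absurd h1 hY1
        · rw [hw2] at h1; exact absurd h1.symm hBY
      have hcbv : GoodAux.cc b (a * x) = a ^ 2 := by
        rw [GoodAux.cc_mul_right hZ, hcba, hbx, mul_one]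
      rcases GoodAux.lemmaL hgood h4 b (a * x) with (h1 | h1 | h1 | h1) | (h1 | h1)
      · rw [hcbv] at h1; exact hA1 h1
      · rw [hcbv] at h1; exact hab h1
      · rw [hcbv, hvax] at h1
        have h2 : (1 : H) = x ^ 2 :=
          mul_left_cancel (show a ^ 2 * 1 = a ^ 2 * x ^ 2 from by rw [mul_one]; exact h1)
        exact hX1 h2.symm
      · rw [hcbv, hvax] at h1
        have h2 : b ^ 2 * a ^ 2 = a ^ 2 * x ^ 2 := by
          calc b ^ 2 * a ^ 2 = b ^ 2 * (b ^ 2 * (a ^ 2 * x ^ 2)) := by rw [← h1]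
            _ = (b ^ 2 * b ^ 2) * (a ^ 2 * x ^ 2) := by group
            _ = a ^ 2 * x ^ 2 := by rw [i2 b, one_mul]
        have h3 : a ^ 2 * b ^ 2 = a ^ 2 * x ^ 2 := (com a b).trans h2
        exact hBK _ hx2K (mul_left_cancel h3)
      · rw [hvax] at h1; exact hvax1 h1
      · rw [hvax] at h1
        have h2 : x ^ 2 = a ^ 2 * b ^ 2 := by
          calc x ^ 2 = a ^ 2 * (a ^ 2 * x ^ 2) := by rw [← mul_assoc, i2 a, one_mul]
            _ = a ^ 2 * b ^ 2 := by rw [h1]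
        rw [hABy] at h2
        exact hXY h2
    · -- cc a b = b^2
      exfalso
      have hcba : GoodAux.cc b a = b ^ 2 := (GoodAux.cc_symm hZ a b).trans h
      have hw2 : (a * b) ^ 2 = a ^ 2 := by
        rw [GoodAux.sq_mul hZ a b, hcba]
        calc a ^ 2 * b ^ 2 * b ^ 2 = a ^ 2 * (b ^ 2 * b ^ 2) := by group
          _ = a ^ 2 := by rw [i2 b, mul_one]
      have hcwy : GoodAux.cc (a * b) y = a ^ 2 * b ^ 2 := by
        rw [GoodAux.cc_mul_left hZ, hay, hby]
      have hABy : a ^ 2 * b ^ 2 = y ^ 2 := by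
        rcases GoodAux.lemmaL hgood h4 (a * b) y with (h1 | h1 | h1 | h1) | (h1 | h1)
        · rw [hcwy] at h1
          exfalso; apply hab
          calc a ^ 2 = (a ^ 2 * b ^ 2) * b ^ 2 := by rw [mul_assoc, i2 b, mul_one]
            _ = 1 * b ^ 2 := by rw [h1]
            _ = b ^ 2 := one_mul _
        · rw [hcwy, hw2] at h1
          exfalso
          exact hB1 (mul_left_cancel (show a ^ 2 * b ^ 2 = a ^ 2 * 1 from by
            rw [mul_one]; exact h1))
        · rw [hcwy] at h1; exact h1
        · rw [hcwy, hw2] at h1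
          exfalso
          exact hBY (mul_left_cancel h1)
        · exact absurd h1 hY1
        · rw [hw2] at h1; exact absurd h1.symm hAY
      have hvbx : (b * x) ^ 2 = b ^ 2 * x ^ 2 := by
        rw [GoodAux.sq_mul hZ b x, GoodAux.cc_symm hZ b x, hbx, mul_one]
      have hcav : GoodAux.cc a (b * x) = b ^ 2 := by
        rw [GoodAux.cc_mul_right hZ, h, hax, mul_one]
      rcases GoodAux.lemmaL hgood h4 a (b * x) with (h1 | h1 | h1 | h1) | (h1 | h1)
      · rw [hcav] at h1; exact hB1 h1
      · rw [hcav] at h1; exact hab h1.symm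
      · rw [hcav, hvbx] at h1
        have h2 : (1 : H) = x ^ 2 :=
          mul_left_cancel (show b ^ 2 * 1 = b ^ 2 * x ^ 2 from by rw [mul_one]; exact h1)
        exact hX1 h2.symm
      · rw [hcav, hvbx] at h1
        have h2 : a ^ 2 * b ^ 2 = b ^ 2 * x ^ 2 := by
          calc a ^ 2 * b ^ 2 = a ^ 2 * (a ^ 2 * (b ^ 2 * x ^ 2)) := by rw [← h1]
            _ = (a ^ 2 * a ^ 2) * (b ^ 2 * x ^ 2) := by group
            _ = b ^ 2 * x ^ 2 := by rw [i2 a, one_mul]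
        have h3 : b ^ 2 * a ^ 2 = b ^ 2 * x ^ 2 := (com b a).trans h2
        exact hAX (mul_left_cancel h3)
      · rw [hvbx] at h1
        apply hBX
        calc b ^ 2 = (b ^ 2 * x ^ 2) * x ^ 2 := by rw [mul_assoc, i2 x, mul_one]
          _ = 1 * x ^ 2 := by rw [h1]
          _ = x ^ 2 := one_mul _
      · rw [hvbx] at h1
        have h2 : x ^ 2 = b ^ 2 * a ^ 2 := by
          calc x ^ 2 = b ^ 2 * (b ^ 2 * x ^ 2) := by rw [← mul_assoc, i2 b, one_mul]
            _ = b ^ 2 * a ^ 2 := by rw [h1]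
        rw [com b a, hABy] at h2
        exact hXY h2
    · -- cc a b = a^2 * b^2
      exfalso
      have hcba : GoodAux.cc b a = a ^ 2 * b ^ 2 := (GoodAux.cc_symm hZ a b).trans h
      have hw2 : (a * b) ^ 2 = 1 := by
        rw [GoodAux.sq_mul hZ a b, hcba]
        calc a ^ 2 * b ^ 2 * (a ^ 2 * b ^ 2) = a ^ 2 * (b ^ 2 * a ^ 2) * b ^ 2 := by group
          _ = a ^ 2 * (a ^ 2 * b ^ 2) * b ^ 2 := by rw [com b a]
          _ = (a ^ 2 * a ^ 2) * (b ^ 2 * b ^ 2) := by group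
          _ = 1 := by rw [i2 a, i2 b, one_mul]
      have hcwy : GoodAux.cc (a * b) y = a ^ 2 * b ^ 2 := by
        rw [GoodAux.cc_mul_left hZ, hay, hby]
      have hABy : a ^ 2 * b ^ 2 = y ^ 2 := by
        rcases GoodAux.lemmaL hgood h4 (a * b) y with (h1 | h1 | h1 | h1) | (h1 | h1)
        · rw [hcwy] at h1
          exfalso; apply hab
          calc a ^ 2 = (a ^ 2 * b ^ 2) * b ^ 2 := by rw [mul_assoc, i2 b, mul_one]
            _ = 1 * b ^ 2 := by rw [h1]
            _ = b ^ 2 := one_mul _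
        · rw [hcwy, hw2] at h1
          exfalso; apply hab
          calc a ^ 2 = (a ^ 2 * b ^ 2) * b ^ 2 := by rw [mul_assoc, i2 b, mul_one]
            _ = 1 * b ^ 2 := by rw [h1]
            _ = b ^ 2 := one_mul _
        · rw [hcwy] at h1; exact h1
        · rw [hcwy, hw2, one_mul] at h1; exact h1
        · exact absurd h1 hY1
        · rw [hw2] at h1; exact absurd h1 hY1
      have hcbv : GoodAux.cc b (a * x) = a ^ 2 * b ^ 2 := by
        rw [GoodAux.cc_mul_right hZ, hcba, hbx, mul_one]
      rcases GoodAux.lemmaL hgood h4 b (a * x) with (h1 | h1 | h1 | h1) | (h1 | h1)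
      · rw [hcbv] at h1
        apply hab
        calc a ^ 2 = (a ^ 2 * b ^ 2) * b ^ 2 := by rw [mul_assoc, i2 b, mul_one]
          _ = 1 * b ^ 2 := by rw [h1]
          _ = b ^ 2 := one_mul _
      · rw [hcbv] at h1
        exact hA1 (mul_right_cancel (show a ^ 2 * b ^ 2 = 1 * b ^ 2 from by
          rw [one_mul]; exact h1))
      · rw [hcbv, hvax] at h1
        have h2 : a ^ 2 * b ^ 2 = a ^ 2 * x ^ 2 := h1
        exact hBK _ hx2K (mul_left_cancel h2)
      · rw [hcbv, hvax] at h1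
        have h2 : a ^ 2 * b ^ 2 = (a ^ 2 * b ^ 2) * x ^ 2 :=
          h1.trans (by rw [show b ^ 2 * (a ^ 2 * x ^ 2) = (b ^ 2 * a ^ 2) * x ^ 2 from by group,
            com b a])
        have h3 : (1 : H) = x ^ 2 :=
          mul_left_cancel (show (a ^ 2 * b ^ 2) * 1 = (a ^ 2 * b ^ 2) * x ^ 2 from by
            rw [mul_one]; exact h2)
        exact hX1 h3.symm
      · rw [hvax] at h1; exact hvax1 h1
      · rw [hvax] at h1
        have h2 : x ^ 2 = a ^ 2 * b ^ 2 := by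
          calc x ^ 2 = a ^ 2 * (a ^ 2 * x ^ 2) := by rw [← mul_assoc, i2 a, one_mul]
            _ = a ^ 2 * b ^ 2 := by rw [h1]
        rw [hABy] at h2
        exact hXY h2
    · exact absurd h hB1
    · exact absurd h.symm hab
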